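/- Let X be a metric space and 𝓑 a bornology on X. The map ‖F‖_op = sup{|F(f)| : f ∈ C(X), ‖f‖_∞ ≤ 1} defines a norm on the dual (C(X), τ_𝓑)* if and only if every member of 𝓑 is relatively compact. -/

import Mathlib

open Set Filter
open Topology

def IsBorn {X : Type*} [MetricSpace X] (𝓑 : Set (Set X)) : Prop :=
  (∀ x : X, ∃ B ∈ 𝓑, x ∈ B) ∧
  (∀ A B : Set X, A ∈ 𝓑 → B ∈ 𝓑 → A ∪ B ∈ 𝓑) ∧
  (∀ A B : Set X, B ∈ 𝓑 → A ⊆ B → A.Nonempty → A ∈ 𝓑)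

def topOfBorn {X : Type*} [MetricSpace X] (𝓑 : Set (Set X)) : TopologicalSpace C(X, ℝ) :=
  TopologicalSpace.mkOfNhds fun f =>
    ⨅ B ∈ 𝓑, ⨅ ε : {e : ℝ // 0 < e}, 𝓟 {g : C(X, ℝ) | ∀ x ∈ B, |f x - g x| < ε.1}

/-- The operator "norm" `‖F‖_op = sup {|F f| : ‖f‖_∞ ≤ 1}` of a linear functional on `C(X)`. -/
noncomputable def opNorm {X : Type*} [MetricSpace X] (F : C(X, ℝ) →ₗ[ℝ] ℝ) : ℝ :=
  sSup {r : ℝ | ∃ f : C(X, ℝ), (∀ x : X, |f x| ≤ 1) ∧ r = |F f|}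

lemma exists_unbounded_on {X : Type*} [MetricSpace X] {B : Set X}
    (h : ¬ IsCompact (closure B)) :
    ∃ (v : C(X, ℝ)) (x : ℕ → X), (∀ n, x n ∈ B) ∧ ∀ n : ℕ, (n : ℝ) + 1 ≤ v (x n) := by
  classical
  have hns : ¬ IsSeqCompact (closure B) := fun hs => h hs.isCompact
  rw [IsSeqCompact] at hns
  push_neg at hns
  obtain ⟨y, hy, hy2⟩ := hns
  have hcl : ∀ a : X, ¬ MapClusterPt a atTop y := by
    intro a ha
    obtain ⟨ψ, hψ, hty⟩ := TopologicalSpace.FirstCountableTopology.tendsto_subseq ha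
    have haB : a ∈ closure B :=
      isClosed_closure.mem_of_tendsto hty (Eventually.of_forall fun n => hy (ψ n))
    exact hy2 a haB ψ hψ hty
  set R : Set X := Set.range y with hR
  have key : ∀ a : X, a ∈ closure (R \ {a}) → MapClusterPt a atTop y := by
    intro a ha
    rw [mapClusterPt_iff_frequently]
    intro U hU
    rw [frequently_atTop]
    intro N
    have hfin : ((y '' {n | n < N}) \ {a}).Finite :=
      ((Set.finite_Iio N).image y).subset Set.diff_subset
    have hopen : IsOpen (interior U \ ((y '' {n | n < N}) \ {a})) :=
      isOpen_interior.sdiff hfin.isClosed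
    have hmem : a ∈ interior U \ ((y '' {n | n < N}) \ {a}) :=
      ⟨mem_interior_iff_mem_nhds.2 hU, fun hc => hc.2 rfl⟩
    rw [mem_closure_iff] at ha
    obtain ⟨p, hpV, hpR', hpa⟩ := ha _ hopen hmem
    obtain ⟨n, rfl⟩ := hpR'
    have hn : ¬ n < N := fun hlt => hpV.2 ⟨Set.mem_image_of_mem y hlt, hpa⟩
    exact ⟨n, not_lt.1 hn, interior_subset hpV.1⟩
  have hclosed : IsClosed R := by
    apply isClosed_of_closure_subset
    intro a ha
    by_contra haR
    rw [← Set.diff_singleton_eq_self haR] at ha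
    exact hcl a (key a ha)
  have hiso : ∀ p ∈ R, ∃ δ > 0, ∀ q ∈ R, q ≠ p → δ ≤ dist p q := by
    intro p hp
    have hnc : p ∉ closure (R \ {p}) := fun hc => hcl p (key p hc)
    rw [Metric.mem_closure_iff] at hnc
    push_neg at hnc
    obtain ⟨δ, hδ, hd⟩ := hnc
    exact ⟨δ, hδ, fun q hq hne => hd q ⟨hq, hne⟩⟩
  have hinf : R.Infinite := by
    intro hfin
    haveI := hfin.to_subtype
    obtain ⟨a, hfib⟩ :=
      Finite.exists_infinite_fiber (fun n : ℕ => (⟨y n, Set.mem_range_self n⟩ : R))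
    have h1 : ((fun n : ℕ => (⟨y n, Set.mem_range_self n⟩ : R)) ⁻¹' {a}).Infinite :=
      Set.infinite_coe_iff.1 hfib
    have h2 : {n : ℕ | y n = (a : X)}.Infinite := by
      refine h1.mono fun n hn => ?_
      have : (⟨y n, Set.mem_range_self n⟩ : R) = a := hn
      exact congrArg Subtype.val this
    apply hcl (a : X)
    rw [mapClusterPt_iff_frequently]
    intro U hU
    rw [frequently_atTop]
    intro N
    obtain ⟨n, hn, hn2⟩ := h2.exists_gt N
    exact ⟨n, le_of_lt hn2, hn ▸ mem_of_mem_nhds hU⟩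
  -- the continuous "index" function on `R`
  haveI : Infinite R := Set.infinite_coe_iff.2 hinf
  have hfind : ∀ p : R, ∃ n, y n = (p : X) := fun p => Set.mem_range.mp p.2
  let gfun : R → ℝ := fun p => 2 * (Nat.find (hfind p) : ℝ) + 2
  have hgcont : Continuous gfun := by
    rw [continuous_iff_continuousAt]
    intro p
    obtain ⟨δ, hδ, hd⟩ := hiso (p : X) p.2
    have hsing : {p} ∈ 𝓝 p := by
      have hball : Metric.ball (p : X) δ ∈ 𝓝 (p : X) := Metric.ball_mem_nhds _ hδ
      have hpre : (Subtype.val) ⁻¹' (Metric.ball (p : X) δ) ∈ 𝓝 p := by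
        rw [nhds_subtype]
        exact preimage_mem_comap hball
      refine Filter.mem_of_superset hpre ?_
      intro q hq
      rw [Set.mem_preimage, Metric.mem_ball] at hq
      by_contra hne
      have hqp : (q : X) ≠ (p : X) := fun hc => hne (by simpa [Subtype.ext_iff] using hc)
      have := hd (q : X) q.2 hqp
      rw [dist_comm] at hq
      exact absurd hq (not_lt.2 this)
    rw [ContinuousAt, Filter.tendsto_def]
    intro V hV
    refine Filter.mem_of_superset hsing ?_
    intro q hq
    rw [Set.mem_singleton_iff] at hq
    subst hq
    exact Set.mem_preimage.2 (mem_of_mem_nhds hV)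
  -- Tietze extension
  obtain ⟨v, hv⟩ := ContinuousMap.exists_restrict_eq hclosed ⟨gfun, hgcont⟩
  have hvR : ∀ p : R, v (p : X) = gfun p := by
    intro p
    have := DFunLike.congr_fun hv p
    simpa [ContinuousMap.restrict_apply] using this
  -- the index map is injective, hence has infinite (unbounded) range
  have hginj : Function.Injective (fun p : R => Nat.find (hfind p)) := by
    intro p q hpq
    have hp := Nat.find_spec (hfind p)
    have hq := Nat.find_spec (hfind q)
    apply Subtype.ext
    rw [← hp, ← hq]
    simp only at hpq
    rw [hpq]
  have hrange : (Set.range (fun p : R => Nat.find (hfind p))).Infinite :=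
    Set.infinite_range_of_injective hginj
  have hxk : ∀ k : ℕ, ∃ z ∈ B, (k : ℝ) + 1 ≤ v z := by
    intro k
    obtain ⟨m, hmmem, hm⟩ := hrange.exists_gt k
    obtain ⟨p, hp⟩ := hmmem
    simp only at hp
    -- v ↑p = 2 * m + 2 > k + 1
    have hvp : v (p : X) = 2 * (m : ℝ) + 2 := by rw [hvR p]; simp [gfun, hp]
    have hk1 : ((k : ℝ) + 1) < v (p : X) := by
      rw [hvp]
      have : (k : ℝ) + 1 ≤ (m : ℝ) := by exact_mod_cast hm
      have hm0 : (0 : ℝ) ≤ (m : ℝ) := Nat.cast_nonneg m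
      linarith
    have hpB : (p : X) ∈ closure B := by
      obtain ⟨n, hn⟩ := hfind p
      exact hn ▸ hy n
    have hO : IsOpen {z : X | (k : ℝ) + 1 < v z} :=
      isOpen_lt continuous_const v.continuous
    rw [mem_closure_iff] at hpB
    obtain ⟨z, hzO, hzB⟩ := hpB _ hO hk1
    exact ⟨z, hzB, le_of_lt hzO⟩
  choose x hxB hxv using hxk
  exact ⟨v, x, hxB, hxv⟩

lemma exists_bad_functional {X : Type*} [MetricSpace X] (𝓑 : Set (Set X)) {B : Set X}
    (hB : B ∈ 𝓑) (v : C(X, ℝ)) (x : ℕ → X) (hxB : ∀ n, x n ∈ B)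
    (hxv : ∀ n : ℕ, (n : ℝ) + 1 ≤ v (x n)) :
    ∃ F : C(X, ℝ) →ₗ[ℝ] ℝ,
      (@Continuous C(X, ℝ) ℝ (topOfBorn 𝓑) _ F) ∧ opNorm F = 0 ∧ F v = 1 := by
  classical
  have hv1 : ∀ n : ℕ, (1 : ℝ) ≤ v (x n) := by
    intro n
    refine le_trans ?_ (hxv n)
    have : (0 : ℝ) ≤ (n : ℝ) := Nat.cast_nonneg n
    linarith
  have hvpos : ∀ n : ℕ, (0 : ℝ) < v (x n) := fun n => lt_of_lt_of_le one_pos (hv1 n)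
  set 𝒰 : Ultrafilter ℕ := Ultrafilter.of atTop with h𝒰def
  have h𝒰 : (𝒰 : Filter ℕ) ≤ atTop := Ultrafilter.of_le atTop
  -- the submodule of sequences converging along 𝒰
  let W : Submodule ℝ (ℕ → ℝ) :=
  { carrier := {s : ℕ → ℝ | ∃ c : ℝ, Tendsto s 𝒰 (𝓝 c)}
    add_mem' := by
      rintro a b ⟨c, hc⟩ ⟨d, hd⟩
      exact ⟨c + d, hc.add hd⟩
    zero_mem' := ⟨0, tendsto_const_nhds⟩
    smul_mem' := by
      rintro r s ⟨c, hc⟩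
      exact ⟨r * c, hc.const_mul r⟩ }
  have hWmem : ∀ {s : ℕ → ℝ} {c : ℝ}, Tendsto s 𝒰 (𝓝 c) → s ∈ W := fun hs => ⟨_, hs⟩
  -- the limit functional on W
  let φ : W →ₗ[ℝ] ℝ :=
  { toFun := fun s => limUnder (𝒰 : Filter ℕ) (s : ℕ → ℝ)
    map_add' := by
      rintro ⟨s, cs, hcs⟩ ⟨t, ct, hct⟩
      show limUnder (𝒰 : Filter ℕ) (s + t) = limUnder (𝒰 : Filter ℕ) s + limUnder (𝒰 : Filter ℕ) t
      rw [hcs.limUnder_eq, hct.limUnder_eq]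
      exact (hcs.add hct).limUnder_eq
    map_smul' := by
      rintro r ⟨s, cs, hcs⟩
      show limUnder (𝒰 : Filter ℕ) (r • s) = r * limUnder (𝒰 : Filter ℕ) s
      rw [hcs.limUnder_eq]
      exact (hcs.const_mul r).limUnder_eq }
  obtain ⟨L, hL⟩ := LinearMap.exists_extend φ
  have hLW : ∀ (s : ℕ → ℝ) (c : ℝ), Tendsto s 𝒰 (𝓝 c) → L s = c := by
    intro s c hs
    have h1 := LinearMap.congr_fun hL ⟨s, c, hs⟩
    exact h1.trans hs.limUnder_eq
  -- the evaluation map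
  let T : C(X, ℝ) →ₗ[ℝ] (ℕ → ℝ) :=
  { toFun := fun f n => f (x n) / v (x n)
    map_add' := by
      intro f g
      funext n
      show (f (x n) + g (x n)) / v (x n) = _
      rw [add_div]
      rfl
    map_smul' := by
      intro r f
      funext n
      show (r * f (x n)) / v (x n) = r * (f (x n) / v (x n))
      rw [mul_div_assoc] }
  have hbound : ∀ (h : C(X, ℝ)) (M : ℝ), 0 ≤ M → (∀ n : ℕ, |h (x n)| ≤ M) →
      |L (T h)| ≤ M := by
    intro h M hM hhM
    have hmem : ∀ n : ℕ, T h n ∈ Set.Icc (-M) M := by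
      intro n
      rw [Set.mem_Icc, ← abs_le]
      have habs : |T h n| = |h (x n)| / v (x n) := by
        show |h (x n) / v (x n)| = _
        rw [abs_div, abs_of_pos (hvpos n)]
      rw [habs]
      exact le_trans (div_le_self (abs_nonneg _) (hv1 n)) (hhM n)
    have hle : (𝒰.map (T h) : Filter ℝ) ≤ 𝓟 (Set.Icc (-M) M) := by
      rw [Ultrafilter.coe_map, Filter.le_principal_iff, Filter.mem_map]
      exact Filter.univ_mem' hmem
    obtain ⟨c, hcmem, hc⟩ :=
      (isCompact_Icc (a := -M) (b := M)).ultrafilter_le_nhds (𝒰.map (T h)) hle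
    have htend : Tendsto (T h) (𝒰 : Filter ℕ) (𝓝 c) := by
      rwa [Ultrafilter.coe_map] at hc
    rw [hLW _ _ htend]
    rw [Set.mem_Icc] at hcmem
    exact abs_le.2 hcmem
  have hzero : ∀ f : C(X, ℝ), (∀ z : X, |f z| ≤ 1) → L (T f) = 0 := by
    intro f hf
    apply hLW
    refine Tendsto.mono_left ?_ h𝒰
    apply squeeze_zero_norm (a := fun n : ℕ => 1 / ((n : ℝ) + 1)) ?_
      tendsto_one_div_add_atTop_nhds_zero_nat
    intro n
    show |f (x n) / v (x n)| ≤ 1 / ((n : ℝ) + 1)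
    rw [abs_div, abs_of_pos (hvpos n)]
    refine div_le_div₀ (by norm_num) (hf _) (by positivity) (hxv n)
  refine ⟨L.comp T, ?_, ?_, ?_⟩
  · -- continuity
    rw [continuous_def]
    intro V hV
    intro f hf
    rcases Metric.isOpen_iff.1 hV _ hf with ⟨δ, hδ, hball⟩
    have hle : (⨅ B' ∈ 𝓑, ⨅ ε : {e : ℝ // 0 < e},
        𝓟 {g : C(X, ℝ) | ∀ z ∈ B', |f z - g z| < ε.1}) ≤
        𝓟 {g : C(X, ℝ) | ∀ z ∈ B, |f z - g z| < δ / 2} :=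
      le_trans (iInf₂_le B hB) (iInf_le _ (⟨δ / 2, half_pos hδ⟩ : {e : ℝ // 0 < e}))
    apply hle
    rw [Filter.mem_principal]
    intro g hg
    have hsub : ∀ n : ℕ, |(f - g) (x n)| ≤ δ / 2 := by
      intro n
      rw [ContinuousMap.sub_apply]
      exact le_of_lt (hg (x n) (hxB n))
    have hb := hbound (f - g) (δ / 2) (le_of_lt (half_pos hδ)) hsub
    rw [map_sub, map_sub] at hb
    apply hball
    rw [Metric.mem_ball, Real.dist_eq]
    simp only [LinearMap.comp_apply]
    have h2 : L (T g) - L (T f) = -(L (T f) - L (T g)) := by ring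
    rw [h2, abs_neg]
    linarith
  · -- opNorm = 0
    have hset : {r : ℝ | ∃ f : C(X, ℝ), (∀ z : X, |f z| ≤ 1) ∧ r = |(L.comp T) f|} = {0} := by
      ext r
      constructor
      · rintro ⟨f, hf, rfl⟩
        rw [Set.mem_singleton_iff, LinearMap.comp_apply, hzero f hf, abs_zero]
      · rintro rfl
        exact ⟨0, fun z => by simp, by simp [hzero]⟩
    rw [opNorm, hset, csSup_singleton]
  · -- F v = 1
    have hTv : T v = fun _ : ℕ => (1 : ℝ) := by
      funext n
      exact div_self (ne_of_gt (hvpos n))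
    show L (T v) = 1
    rw [hTv]
    exact hLW _ 1 tendsto_const_nhds

/-- `‖·‖_op` is a norm on `(C(X), τ_𝓑)*` (i.e. it vanishes only at `0`)
if and only if every member of `𝓑` is relatively compact. -/
theorem opNorm_is_norm_iff {X : Type*} [MetricSpace X] (𝓑 : Set (Set X))
    (h𝓑 : IsBorn 𝓑) :
    (∀ F : C(X, ℝ) →ₗ[ℝ] ℝ, @Continuous C(X, ℝ) ℝ (topOfBorn 𝓑) _ F →
      opNorm F = 0 → F = 0) ↔ ∀ B ∈ 𝓑, IsCompact (closure B) := by
  constructor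
  · intro H B hB
    by_contra hnc
    obtain ⟨v, x, hxB, hxv⟩ := exists_unbounded_on hnc
    obtain ⟨F, hFc, hF0, hFv⟩ := exists_bad_functional 𝓑 hB v x hxB hxv
    have hzero := H F hFc hF0
    rw [hzero] at hFv
    simp at hFv
  · intro hRC F hFc hop
    rcases isEmpty_or_nonempty X with hX | hX
    · apply LinearMap.ext
      intro f
      have hf0 : f = 0 := ContinuousMap.ext fun z => (IsEmpty.false z).elim
      rw [hf0, map_zero, LinearMap.zero_apply]
    · obtain ⟨x0⟩ := hX
      obtain ⟨B₀, hB₀, -⟩ := h𝓑.1 x0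
      -- extract a seminorm bound from continuity
      have hopen := @Continuous.isOpen_preimage _ _ (topOfBorn 𝓑) _ F hFc
        (Metric.ball (0 : ℝ) 1) Metric.isOpen_ball
      have h0 : (0 : C(X, ℝ)) ∈ ⇑F ⁻¹' Metric.ball (0 : ℝ) 1 := by
        simp [Metric.mem_ball, map_zero]
      have hmem : (⇑F ⁻¹' Metric.ball (0 : ℝ) 1) ∈
          ⨅ B ∈ 𝓑, ⨅ ε : {e : ℝ // 0 < e},
            𝓟 {g : C(X, ℝ) | ∀ z ∈ B, |(0 : C(X, ℝ)) z - g z| < ε.1} := hopen 0 h0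
      have hrw : (⨅ B ∈ 𝓑, ⨅ ε : {e : ℝ // 0 < e},
            𝓟 {g : C(X, ℝ) | ∀ z ∈ B, |(0 : C(X, ℝ)) z - g z| < ε.1})
          = ⨅ p : ↥𝓑 × {e : ℝ // 0 < e},
            𝓟 {g : C(X, ℝ) | ∀ z ∈ (p.1 : Set X), |(0 : C(X, ℝ)) z - g z| < p.2.1} := by
        rw [iInf_subtype', iInf_prod]
      haveI : Nonempty (↥𝓑 × {e : ℝ // 0 < e}) := ⟨⟨⟨B₀, hB₀⟩, ⟨1, one_pos⟩⟩⟩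
      have hdir : Directed (· ≥ ·) (fun p : ↥𝓑 × {e : ℝ // 0 < e} =>
          𝓟 {g : C(X, ℝ) | ∀ z ∈ (p.1 : Set X), |(0 : C(X, ℝ)) z - g z| < p.2.1}) := by
        rintro ⟨⟨B1, hB1⟩, ⟨e1, he1⟩⟩ ⟨⟨B2, hB2⟩, ⟨e2, he2⟩⟩
        refine ⟨⟨⟨B1 ∪ B2, h𝓑.2.1 _ _ hB1 hB2⟩, ⟨min e1 e2, lt_min he1 he2⟩⟩, ?_, ?_⟩
        · apply principal_mono.2
          intro g hg z hz
          exact lt_of_lt_of_le (hg z (Or.inl hz)) (min_le_left _ _)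
        · apply principal_mono.2
          intro g hg z hz
          exact lt_of_lt_of_le (hg z (Or.inr hz)) (min_le_right _ _)
      rw [hrw, Filter.mem_iInf_of_directed hdir] at hmem
      obtain ⟨⟨⟨B, hB⟩, ⟨ε, hε⟩⟩, hmem⟩ := hmem
      rw [Filter.mem_principal] at hmem
      have hkey : ∀ g : C(X, ℝ), (∀ z ∈ B, |g z| < ε) → |F g| < 1 := by
        intro g hg
        have hgm : g ∈ {g : C(X, ℝ) | ∀ z ∈ B, |(0 : C(X, ℝ)) z - g z| < ε} := by
          intro z hz
          simpa using hg z hz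
        have := hmem hgm
        rw [Set.mem_preimage, Metric.mem_ball, Real.dist_eq, sub_zero] at this
        exact this
      -- Step 1: F vanishes on functions bounded by 1
      have hbdd : ∀ f : C(X, ℝ), (∀ z : X, |f z| ≤ 1) → |F f| ≤ 2 / ε := by
        intro f hf
        have h2 : |F ((ε / 2) • f)| < 1 := by
          apply hkey
          intro z hz
          rw [ContinuousMap.smul_apply, smul_eq_mul, abs_mul, abs_of_pos (half_pos hε)]
          have h3 : |f z| ≤ 1 := hf z
          nlinarith [abs_nonneg (f z)]
        rw [map_smul, smul_eq_mul, abs_mul, abs_of_pos (half_pos hε)] at h2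
        rw [le_div_iff₀ hε]
        nlinarith [abs_nonneg (F f)]
      have hsetbdd : BddAbove {r : ℝ | ∃ f : C(X, ℝ), (∀ z : X, |f z| ≤ 1) ∧ r = |F f|} := by
        refine ⟨2 / ε, ?_⟩
        rintro r ⟨f, hf, rfl⟩
        exact hbdd f hf
      have hzero1 : ∀ f : C(X, ℝ), (∀ z : X, |f z| ≤ 1) → F f = 0 := by
        intro f hf
        have hle : |F f| ≤ 0 := by
          have h1 : |F f| ≤ sSup {r : ℝ | ∃ f : C(X, ℝ), (∀ z : X, |f z| ≤ 1) ∧ r = |F f|} :=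
            le_csSup hsetbdd ⟨f, hf, rfl⟩
          have h2 : sSup {r : ℝ | ∃ f : C(X, ℝ), (∀ z : X, |f z| ≤ 1) ∧ r = |F f|} = 0 := hop
          linarith
        exact abs_eq_zero.1 (le_antisymm hle (abs_nonneg _))
      -- Step 2: general f
      apply LinearMap.ext
      intro f
      have hK : IsCompact (closure B) := hRC B hB
      obtain ⟨C, hC⟩ := hK.exists_bound_of_continuousOn f.continuous.continuousOn
      set M := max C 1 with hMdef
      have hM1 : (1 : ℝ) ≤ M := le_max_right _ _
      have hM0 : (0 : ℝ) < M := lt_of_lt_of_le one_pos hM1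
      set g : C(X, ℝ) := ⟨fun z => max (-M) (min M (f z)),
        continuous_const.max (continuous_const.min (map_continuous f))⟩ with hgdef
      have hgB : ∀ z : X, |g z| ≤ M := by
        intro z
        rw [abs_le]
        constructor
        · exact le_max_left _ _
        · exact max_le (by linarith) (min_le_left _ _)
      have hgf : ∀ z ∈ B, g z = f z := by
        intro z hz
        have h1 : |f z| ≤ C := by
          have := hC z (subset_closure hz)
          rwa [Real.norm_eq_abs] at this
        have h2 : |f z| ≤ M := le_trans h1 (le_max_left _ _)
        rw [abs_le] at h2
        show max (-M) (min M (f z)) = f z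
        rw [min_eq_right h2.2, max_eq_right h2.1]
      have hFg : F g = 0 := by
        have h1 : F (M⁻¹ • g) = 0 := by
          apply hzero1
          intro z
          rw [ContinuousMap.smul_apply, smul_eq_mul, abs_mul, abs_of_pos (inv_pos.2 hM0)]
          calc M⁻¹ * |g z| ≤ M⁻¹ * M :=
                mul_le_mul_of_nonneg_left (hgB z) (le_of_lt (inv_pos.2 hM0))
            _ = 1 := inv_mul_cancel₀ (ne_of_gt hM0)
        rw [map_smul, smul_eq_mul] at h1
        rcases mul_eq_zero.1 h1 with h | h
        · exact absurd h (inv_ne_zero (ne_of_gt hM0))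
        · exact h
      have hFfg : F (f - g) = 0 := by
        by_contra hne
        have habs : 0 < |F (f - g)| := abs_pos.2 hne
        have hlarge : |F ((2 / |F (f - g)|) • (f - g))| < 1 := by
          apply hkey
          intro z hz
          have h0 : (f - g) z = 0 := by
            rw [ContinuousMap.sub_apply, hgf z hz, sub_self]
          rw [ContinuousMap.smul_apply, h0, smul_zero, abs_zero]
          exact hε
        rw [map_smul, smul_eq_mul, abs_mul,
          abs_of_pos (div_pos two_pos habs), div_mul_cancel₀ _ (ne_of_gt habs)] at hlarge
        linarith
      have hsplit : F f = F (f - g) + F g := by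
        rw [map_sub]
        ring
      rw [hsplit, hFfg, hFg, add_zero, LinearMap.zero_apply]
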